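/- Let n be a positive integer and let f : ℝ → ℝ be n times continuously differentiable on an open interval containing the point x. Then the n-th order backward difference quotients converge to the n-th derivative: the limit as h → 0⁺ of h^(−n) · Σ_{k=0}^{n} (−1)^k · (n choose k) · f(x − k·h) equals the n-th derivative f^(n)(x). -/

import Mathlib

open Filter Set Function

/-- The backward difference sum equals an iterated forward difference at `x - n*h`. -/
lemma backward_sum_eq_fwdDiff (n : ℕ) (f : ℝ → ℝ) (x h : ℝ) :
    ∑ k ∈ Finset.range (n + 1), (-1 : ℝ) ^ k * (n.choose k : ℝ) * f (x - (k : ℝ) * h)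
      = (fwdDiff h)^[n] f (x - n * h) := by
  rw [fwdDiff_iter_eq_sum_shift, ← Finset.sum_range_reflect]
  refine Finset.sum_congr rfl fun k hk => ?_
  rw [Finset.mem_range, Nat.lt_succ_iff] at hk
  have h2 : ((n - k : ℕ) : ℝ) = (n : ℝ) - k := Nat.cast_sub hk
  have h3 : x - ((n - k : ℕ) : ℝ) * h = x - n * h + (k : ℝ) * h := by rw [h2]; ring
  simp only [Nat.add_sub_cancel, Nat.choose_symm hk, h3, zsmul_eq_mul, nsmul_eq_mul]
  push_cast
  ring


lemma fwdDiff_iter_exists_deriv (a b : ℝ) :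
    ∀ (n : ℕ) (f : ℝ → ℝ), ContDiffOn ℝ n f (Set.Ioo a b) →
    ∀ y h : ℝ, 0 < h → y ∈ Set.Ioo a b → y + n * h ∈ Set.Ioo a b →
    ∃ ξ ∈ Set.Icc y (y + n * h), (fwdDiff h)^[n] f y = h ^ n * iteratedDeriv n f ξ := by
  intro n
  induction n with
  | zero =>
    intro f _ y h _ hy _
    exact ⟨y, ⟨le_refl y, by simp⟩, by simp⟩
  | succ n IH =>
    intro f hf y h hh hy hyn
    have hb : y + (n + 1 : ℝ) * h < b := by
      have := hyn.2; push_cast at this; linarith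
    have ha : a < y := hy.1
    have hfd : DifferentiableOn ℝ f (Set.Ioo a b) :=
      hf.differentiableOn (by simp)
    -- derivative of the iterated forward difference
    have hder : ∀ t ∈ Set.Icc y (y + h),
        HasDerivAt ((fwdDiff h)^[n] f) ((fwdDiff h)^[n] (deriv f) t) t := by
      intro t ht
      have hsum : (fwdDiff h)^[n] f = fun t =>
          ∑ k ∈ Finset.range (n + 1),
            ((-1 : ℤ) ^ (n - k) * (n.choose k : ℤ)) • f (t + k • h) :=
        funext fun t => by
          rw [fwdDiff_iter_eq_sum_shift]
      rw [hsum]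
      have h2 : (fwdDiff h)^[n] (deriv f) t =
          ∑ k ∈ Finset.range (n + 1),
            ((-1 : ℤ) ^ (n - k) * (n.choose k : ℤ)) • deriv f (t + k • h) := by
        rw [fwdDiff_iter_eq_sum_shift]
      rw [h2]
      apply HasDerivAt.fun_sum
      intro k hk
      rw [Finset.mem_range, Nat.lt_succ_iff] at hk
      have hmem : t + k • h ∈ Set.Ioo a b := by
        have hk' : (k : ℝ) ≤ n := by exact_mod_cast hk
        have h1 : (0:ℝ) ≤ (k:ℝ) * h := by positivity
        constructor
        · simp only [nsmul_eq_mul]; linarith [ht.1]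
        · simp only [nsmul_eq_mul]
          nlinarith [ht.2, hh.le]
      have hfa : HasDerivAt f (deriv f (t + k • h)) (t + k • h) :=
        ((hfd.differentiableAt (Ioo_mem_nhds hmem.1 hmem.2)).hasDerivAt)
      exact (hfa.comp_add_const t (k • h)).const_smul ((-1 : ℤ) ^ (n - k) * (n.choose k : ℤ))
    -- mean value theorem on [y, y+h]
    have hlt : y < y + h := by linarith
    obtain ⟨c, hc, hceq⟩ := exists_hasDerivAt_eq_slope ((fwdDiff h)^[n] f)
      (fun t => (fwdDiff h)^[n] (deriv f) t) hlt
      (fun t ht => (hder t ht).continuousAt.continuousWithinAt)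
      (fun t ht => hder t (Ioo_subset_Icc_self ht))
    -- apply induction hypothesis to deriv f at c
    have hf' : ContDiffOn ℝ n (deriv f) (Set.Ioo a b) :=
      hf.deriv_of_isOpen isOpen_Ioo (by exact_mod_cast le_refl (n + 1))
    have hc1 : c ∈ Set.Ioo a b := by
      constructor
      · linarith [hc.1]
      · have : (0:ℝ) ≤ (n:ℝ) * h := by positivity
        linarith [hc.2]
    have hc2 : c + n * h ∈ Set.Ioo a b := by
      constructor
      · have : (0:ℝ) ≤ (n:ℝ) * h := by positivity
        linarith [hc.1]
      · linarith [hc.2]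
    obtain ⟨ξ, hξ, hξeq⟩ := IH (deriv f) hf' c h hh hc1 hc2
    refine ⟨ξ, ⟨by linarith [hξ.1, hc.1], by push_cast; linarith [hξ.2, hc.2]⟩, ?_⟩
    have hstep : (fwdDiff h)^[n + 1] f y
        = (fwdDiff h)^[n] f (y + h) - (fwdDiff h)^[n] f y := by
      rw [Function.iterate_succ_apply']
      rfl
    rw [hstep, iteratedDeriv_succ']
    have hval : (fwdDiff h)^[n] f (y + h) - (fwdDiff h)^[n] f y
        = h * ((fwdDiff h)^[n] (deriv f) c) := by
      rw [hceq, add_sub_cancel_left]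
      field_simp
    rw [hval, hξeq]
    ring


/-- Backward-difference representation of the integer-order derivative:
if `f` is `n` times continuously differentiable on an open interval containing `x`
(`n ≥ 1`), then the `n`-th order backward difference quotients
`h^(-n) * ∑_{k=0}^{n} (-1)^k (n choose k) f(x - k h)` converge, as `h → 0⁺`,
to the `n`-th derivative `f^(n)(x)`. -/
theorem backward_difference_tendsto_iteratedDeriv
    (n : ℕ) (hn : 0 < n) (f : ℝ → ℝ) (a b x : ℝ) (hx : x ∈ Set.Ioo a b)
    (hf : ContDiffOn ℝ n f (Set.Ioo a b)) :
    Filter.Tendsto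
      (fun h : ℝ => h ^ (-(n : ℤ)) *
        ∑ k ∈ Finset.range (n + 1), (-1 : ℝ) ^ k * (n.choose k : ℝ) * f (x - (k : ℝ) * h))
      (nhdsWithin 0 (Set.Ioi 0)) (nhds (iteratedDeriv n f x)) := by
  -- continuity of the n-th derivative at x
  have hDcont : ContinuousAt (iteratedDeriv n f) x := by
    have h1 : ContinuousOn (iteratedDerivWithin n f (Set.Ioo a b)) (Set.Ioo a b) :=
      hf.continuousOn_iteratedDerivWithin (le_refl _) isOpen_Ioo.uniqueDiffOn
    have h2 : ContinuousOn (iteratedDeriv n f) (Set.Ioo a b) := by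
      refine h1.congr fun z hz => ?_
      rw [iteratedDeriv_eq_iteratedFDeriv, iteratedDerivWithin_eq_iteratedFDerivWithin,
        iteratedFDerivWithin_of_isOpen n isOpen_Ioo hz]
    exact h2.continuousAt (Ioo_mem_nhds hx.1 hx.2)
  rw [Metric.tendsto_nhdsWithin_nhds]
  intro ε hε
  rw [Metric.continuousAt_iff] at hDcont
  obtain ⟨δ₁, hδ₁, hδ₁'⟩ := hDcont ε hε
  have hxa : (0:ℝ) < x - a := by linarith [hx.1]
  have hn' : (0:ℝ) < n := by exact_mod_cast hn
  refine ⟨min ((x - a) / n) (δ₁ / n), lt_min (by positivity) (by positivity), ?_⟩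
  intro h hh hhd
  have hh' : (0:ℝ) < h := Set.mem_Ioi.mp hh
  rw [Real.dist_eq, sub_zero, abs_of_pos hh'] at hhd
  have hnh1 : (n:ℝ) * h < x - a := by
    have h1 : h < (x - a) / n := lt_of_lt_of_le hhd (min_le_left _ _)
    calc (n:ℝ) * h < n * ((x - a)/n) := by exact mul_lt_mul_of_pos_left h1 hn'
      _ = x - a := by field_simp
  have hnh2 : (n:ℝ) * h < δ₁ := by
    have h1 : h < δ₁ / n := lt_of_lt_of_le hhd (min_le_right _ _)
    calc (n:ℝ) * h < n * (δ₁/n) := by exact mul_lt_mul_of_pos_left h1 hn'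
      _ = δ₁ := by field_simp
  have hy : x - n * h ∈ Set.Ioo a b := by
    constructor
    · linarith
    · have : (0:ℝ) < (n:ℝ) * h := by positivity
      linarith [hx.2]
  have hyn : (x - n * h) + n * h ∈ Set.Ioo a b := by
    simpa using hx
  obtain ⟨ξ, hξ, hξeq⟩ := fwdDiff_iter_exists_deriv a b n f hf (x - n*h) h hh' hy hyn
  rw [backward_sum_eq_fwdDiff, hξeq]
  have hpow : h ^ (-(n:ℤ)) * (h ^ n * iteratedDeriv n f ξ) = iteratedDeriv n f ξ := by
    rw [zpow_neg, zpow_natCast]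
    field_simp
  rw [hpow]
  apply hδ₁'
  rw [Real.dist_eq]
  have h1 : x - n*h ≤ ξ := hξ.1
  have h2 : ξ ≤ x := by have := hξ.2; linarith
  rw [abs_of_nonpos (by linarith)]
  linarith
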